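/- arXiv:1507.00881 — 2 statements merged into one kernel-verified Lean document; each statement's English description precedes it below -/
import Mathlib

section
/- The strong metric dimension of the generalized Petersen graph GP(8,2) equals 8, with {u_4,u_5,u_6,u_7,v_1,v_3,v_5,v_7} being a strong resolving set of minimum cardinality. -/
/-- A vertex `w` strongly resolves vertices `u` and `v` in graph `G`:
`u` lies on a shortest `v`–`w` path or `v` lies on a shortest `u`–`w` path,
equivalently via distances. -/
def StronglyResolves {V : Type*} (G : SimpleGraph V) (w u v : V) : Prop :=
  G.dist w u = G.dist w v + G.dist v u ∨ G.dist w v = G.dist w u + G.dist u v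

/-- `S` is a strong resolving set of `G`. -/
def IsStrongResolvingSet {V : Type*} (G : SimpleGraph V) (S : Set V) : Prop :=
  ∀ u v : V, u ≠ v → ∃ w ∈ S, StronglyResolves G w u v

/-- The strong metric dimension: minimum cardinality of a strong resolving set. -/
noncomputable def sdim {V : Type*} (G : SimpleGraph V) : ℕ :=
  sInf {m : ℕ | ∃ S : Set V, IsStrongResolvingSet G S ∧ S.ncard = m}

/-- Mutually maximally distant vertices. -/
def MutuallyMaximallyDistant {V : Type*} (G : SimpleGraph V) (u v : V) : Prop :=
  u ≠ v ∧ (∀ w : V, G.Adj u w → G.dist w v ≤ G.dist u v) ∧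
    (∀ w : V, G.Adj v w → G.dist u w ≤ G.dist u v)

/-- The generalized Petersen graph `GP n k`, with outer vertices `Sum.inl i` (the `uᵢ`)
and inner vertices `Sum.inr i` (the `vᵢ`), indices in `ZMod n`. -/
def GP (n k : ℕ) : SimpleGraph (ZMod n ⊕ ZMod n) where
  Adj x y := match x, y with
    | Sum.inl i, Sum.inl j => i ≠ j ∧ (j = i + 1 ∨ i = j + 1)
    | Sum.inl i, Sum.inr j => i = j
    | Sum.inr i, Sum.inl j => i = j
    | Sum.inr i, Sum.inr j => i ≠ j ∧ (j = i + (k : ZMod n) ∨ i = j + (k : ZMod n))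
  symm := ⟨by rintro (i|i) (j|j) h <;> simp_all <;> tauto⟩
  loopless := ⟨by rintro (i|i) h <;> simp_all⟩

instance : DecidableRel (GP 8 2).Adj := fun x y =>
  match x, y with
  | Sum.inl i, Sum.inl j => inferInstanceAs (Decidable (i ≠ j ∧ (j = i + 1 ∨ i = j + 1)))
  | Sum.inl i, Sum.inr j => inferInstanceAs (Decidable (i = j))
  | Sum.inr i, Sum.inl j => inferInstanceAs (Decidable (i = j))
  | Sum.inr i, Sum.inr j => inferInstanceAs (Decidable (i ≠ j ∧ (j = i + 2 ∨ i = j + 2)))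

def duu : ZMod 8 → ℕ := ![0, 1, 2, 3, 4, 3, 2, 1]
def duv : ZMod 8 → ℕ := ![1, 2, 2, 3, 3, 3, 2, 2]
def dvv : ZMod 8 → ℕ := ![0, 3, 1, 4, 2, 4, 1, 3]

def dGP : ZMod 8 ⊕ ZMod 8 → ZMod 8 ⊕ ZMod 8 → ℕ
  | Sum.inl i, Sum.inl j => duu (j - i)
  | Sum.inl i, Sum.inr j => duv (j - i)
  | Sum.inr i, Sum.inl j => duv (i - j)
  | Sum.inr i, Sum.inr j => dvv (j - i)

/-- Generic: a function satisfying the shortest-path recurrences is the distance. -/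
lemma dist_eq_of_aux {V : Type*} (G : SimpleGraph V) (d : V → V → ℕ)
    (h0 : ∀ u v, d u v = 0 ↔ u = v)
    (hstep : ∀ u v, d u v ≠ 0 → ∃ w, G.Adj w v ∧ d u w + 1 = d u v)
    (htri : ∀ u v w, G.Adj u v → d u w ≤ d v w + 1) :
    ∀ u v, G.dist u v = d u v := by
  have hwalk : ∀ n u v, d u v = n → ∃ p : G.Walk u v, p.length = n := by
    intro n
    induction n with
    | zero => intro u v h; obtain rfl := (h0 u v).1 h; exact ⟨SimpleGraph.Walk.nil, rfl⟩
    | succ n ih =>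
      intro u v h
      obtain ⟨w, hadj, hw⟩ := hstep u v (by omega)
      obtain ⟨p, hp⟩ := ih u w (by omega)
      exact ⟨p.concat hadj, by simp [hp]⟩
  have hle : ∀ {u v : V} (p : G.Walk u v), d u v ≤ p.length := by
    intro u v p
    induction p with
    | nil => simp [(h0 _ _).2 rfl]
    | cons h q ih =>
      calc d _ _ ≤ d _ _ + 1 := htri _ _ _ h
        _ ≤ q.length + 1 := by omega
  intro u v
  obtain ⟨p, hp⟩ := hwalk (d u v) u v rfl
  have h1 : G.dist u v ≤ d u v := hp ▸ SimpleGraph.dist_le p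
  have hr : G.Reachable u v := ⟨p⟩
  obtain ⟨q, hq⟩ := hr.exists_walk_length_eq_dist
  have h2 : d u v ≤ G.dist u v := hq ▸ hle q
  omega

lemma dist_GP : ∀ u v, (GP 8 2).dist u v = dGP u v :=
  dist_eq_of_aux (GP 8 2) dGP (by decide) (by decide) (by decide)

def SRd (w u v : ZMod 8 ⊕ ZMod 8) : Prop :=
  dGP w u = dGP w v + dGP v u ∨ dGP w v = dGP w u + dGP u v

instance : ∀ w u v, Decidable (SRd w u v) := fun _ _ _ => inferInstanceAs (Decidable (_ ∨ _))

lemma SR_iff (w u v : ZMod 8 ⊕ ZMod 8) : StronglyResolves (GP 8 2) w u v ↔ SRd w u v := by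
  unfold StronglyResolves SRd
  simp only [dist_GP]

abbrev VV := ZMod 8 ⊕ ZMod 8

def pairs : Fin 8 → VV × VV :=
  ![(Sum.inl 0, Sum.inl 4), (Sum.inl 1, Sum.inl 5), (Sum.inl 2, Sum.inl 6),
    (Sum.inl 3, Sum.inl 7), (Sum.inr 0, Sum.inr 3), (Sum.inr 1, Sum.inr 6),
    (Sum.inr 2, Sum.inr 5), (Sum.inr 4, Sum.inr 7)]

lemma pairs_resolver : ∀ (i : Fin 8) (w : VV), SRd w (pairs i).1 (pairs i).2 →
    w = (pairs i).1 ∨ w = (pairs i).2 := by decide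

lemma pairs_disjoint : ∀ i j : Fin 8, i ≠ j →
    (pairs i).1 ≠ (pairs j).1 ∧ (pairs i).1 ≠ (pairs j).2 ∧
    (pairs i).2 ≠ (pairs j).1 ∧ (pairs i).2 ≠ (pairs j).2 := by decide

lemma pairs_ne : ∀ i : Fin 8, (pairs i).1 ≠ (pairs i).2 := by decide

def Sset : Set VV :=
  {Sum.inl 4, Sum.inl 5, Sum.inl 6, Sum.inl 7, Sum.inr 1, Sum.inr 3, Sum.inr 5, Sum.inr 7}

lemma Sset_resolves : IsStrongResolvingSet (GP 8 2) Sset := by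
  intro u v huv
  have key : ∀ u v : VV, u ≠ v →
      SRd (Sum.inl 4) u v ∨ SRd (Sum.inl 5) u v ∨ SRd (Sum.inl 6) u v ∨ SRd (Sum.inl 7) u v ∨
      SRd (Sum.inr 1) u v ∨ SRd (Sum.inr 3) u v ∨ SRd (Sum.inr 5) u v ∨ SRd (Sum.inr 7) u v := by
    decide
  rcases key u v huv with h | h | h | h | h | h | h | h
  · exact ⟨Sum.inl 4, by simp [Sset], (SR_iff _ _ _).2 h⟩
  · exact ⟨Sum.inl 5, by simp [Sset], (SR_iff _ _ _).2 h⟩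
  · exact ⟨Sum.inl 6, by simp [Sset], (SR_iff _ _ _).2 h⟩
  · exact ⟨Sum.inl 7, by simp [Sset], (SR_iff _ _ _).2 h⟩
  · exact ⟨Sum.inr 1, by simp [Sset], (SR_iff _ _ _).2 h⟩
  · exact ⟨Sum.inr 3, by simp [Sset], (SR_iff _ _ _).2 h⟩
  · exact ⟨Sum.inr 5, by simp [Sset], (SR_iff _ _ _).2 h⟩
  · exact ⟨Sum.inr 7, by simp [Sset], (SR_iff _ _ _).2 h⟩

lemma Sset_ncard : Sset.ncard = 8 := by
  have : Sset = (↑({Sum.inl 4, Sum.inl 5, Sum.inl 6, Sum.inl 7, Sum.inr 1, Sum.inr 3,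
      Sum.inr 5, Sum.inr 7} : Finset VV) : Set VV) := by
    simp [Sset]
  rw [this, Set.ncard_coe_finset]
  decide

lemma lower_bound : ∀ m ∈ {m : ℕ | ∃ S : Set VV, IsStrongResolvingSet (GP 8 2) S ∧ S.ncard = m},
    8 ≤ m := by
  rintro m ⟨S, hS, rfl⟩
  have hch : ∀ i : Fin 8, ∃ w ∈ S, w = (pairs i).1 ∨ w = (pairs i).2 := by
    intro i
    obtain ⟨w, hwS, hw⟩ := hS (pairs i).1 (pairs i).2 (pairs_ne i)
    exact ⟨w, hwS, pairs_resolver i w ((SR_iff _ _ _).1 hw)⟩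
  choose f hfS hf using hch
  have hinj : Function.Injective f := by
    intro i j hij
    by_contra hne
    obtain ⟨h1, h2, h3, h4⟩ := pairs_disjoint i j hne
    rcases hf i with hi | hi <;> rcases hf j with hj | hj <;>
      simp_all
  have hsub : ↑(Finset.univ.image f) ⊆ S := by
    intro x hx
    simp only [Finset.coe_image, Finset.coe_univ, Set.image_univ] at hx
    obtain ⟨i, rfl⟩ := hx
    exact hfS i
  calc 8 = (Finset.univ.image f).card := by
        rw [Finset.card_image_of_injective _ hinj]; simp
    _ = (↑(Finset.univ.image f) : Set VV).ncard := (Set.ncard_coe_finset _).symm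
    _ ≤ S.ncard := Set.ncard_le_ncard hsub (Set.toFinite S)

/-- `sdim (GP 8 2) = 8`, and `{u₄,u₅,u₆,u₇,v₁,v₃,v₅,v₇}` is a strong resolving set of
minimum cardinality 8. -/
theorem stmt_17 :
    sdim (GP 8 2) = 8 ∧
    IsStrongResolvingSet (GP 8 2)
      {Sum.inl 4, Sum.inl 5, Sum.inl 6, Sum.inl 7, Sum.inr 1, Sum.inr 3, Sum.inr 5, Sum.inr 7} ∧
    ({Sum.inl 4, Sum.inl 5, Sum.inl 6, Sum.inl 7, Sum.inr 1, Sum.inr 3, Sum.inr 5, Sum.inr 7} :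
      Set (ZMod 8 ⊕ ZMod 8)).ncard = 8 := by
  have hmem : 8 ∈ {m : ℕ | ∃ S : Set VV, IsStrongResolvingSet (GP 8 2) S ∧ S.ncard = m} :=
    ⟨Sset, Sset_resolves, Sset_ncard⟩
  refine ⟨?_, Sset_resolves, Sset_ncard⟩
  exact le_antisymm (Nat.sInf_le hmem) (le_csInf ⟨8, hmem⟩ lower_bound)
end

section
/- In the generalized Petersen graph GP(4k,2) with k ≥ 3, for even indices i < j with j − i = 2k, the pair (v_i, v_j) is strongly resolved by both u_i and u_j; indeed u_i, v_i, v_{i+2}, …, v_{i+2k}, u_{i+2k} is a shortest u_i–u_{i+2k} path containing both v_i and v_j. -/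
def phi {n : ℕ} : ZMod n ⊕ ZMod n → ZMod n := Sum.elim id id
def sd {n : ℕ} : ZMod n ⊕ ZMod n → Bool := Sum.elim (fun _ => false) (fun _ => true)

lemma walk_inv (n : ℕ) {x y : ZMod n ⊕ ZMod n} (p : (GP n 2).Walk x y) :
    ∃ s t1 t2 : ℕ, ∃ m : ℤ, p.length = s + t1 + t2 ∧ m.natAbs ≤ t1 + 2*t2 ∧
    (m : ZMod n) = phi y - phi x ∧ (Even s ↔ (sd x = sd y)) ∧
    (s = 0 → (sd x = true → t1 = 0) ∧ (sd x = false → t2 = 0)) := by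
  induction p with
  | nil => exact ⟨0, 0, 0, 0, by simp, by simp, by simp, by simp, by simp⟩
  | @cons a b c h q ih =>
    obtain ⟨s, t1, t2, m, hl, hm, hφ, hs, h0⟩ := ih
    rcases a with a | a <;> rcases b with b | b
    · -- outer edge
      obtain ⟨-, hb | hb⟩ := h
      · refine ⟨s, t1 + 1, t2, m + 1, by change q.length + 1 = _; omega, ?_, ?_, ?_, ?_⟩
        · calc (m+1).natAbs ≤ m.natAbs + 1 := Int.natAbs_add_le m 1
            _ ≤ t1 + 1 + 2*t2 := by omega
        · push_cast [hφ]; simp only [phi, Sum.elim_inl, Sum.elim_inr, id, hb]; ring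
        · simpa [sd] using hs
        · intro hs0; exact ⟨by simp [sd], fun _ => (h0 hs0).2 (by simp [sd])⟩
      · refine ⟨s, t1 + 1, t2, m - 1, by change q.length + 1 = _; omega, ?_, ?_, ?_, ?_⟩
        · calc (m-1).natAbs ≤ m.natAbs + 1 := Int.natAbs_sub_le m 1
            _ ≤ t1 + 1 + 2*t2 := by omega
        · push_cast [hφ]; simp only [phi, Sum.elim_inl, Sum.elim_inr, id, hb]; ring
        · simpa [sd] using hs
        · intro hs0; exact ⟨by simp [sd], fun _ => (h0 hs0).2 (by simp [sd])⟩
    · -- spoke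
      refine ⟨s + 1, t1, t2, m, by simp [hl]; omega, hm, ?_, ?_, by omega⟩
      · have hab : a = b := h; subst hab; rw [hφ]; simp [phi]
      · rw [Nat.even_add_one, hs]; rcases c with c | c <;> simp [sd]
    · -- spoke
      refine ⟨s + 1, t1, t2, m, by simp [hl]; omega, hm, ?_, ?_, by omega⟩
      · have hab : a = b := h; subst hab; rw [hφ]; simp [phi]
      · rw [Nat.even_add_one, hs]; rcases c with c | c <;> simp [sd]
    · -- inner edge
      obtain ⟨-, hb | hb⟩ := h
      · refine ⟨s, t1, t2 + 1, m + 2, by change q.length + 1 = _; omega, ?_, ?_, ?_, ?_⟩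
        · calc (m+2).natAbs ≤ m.natAbs + 2 := Int.natAbs_add_le m 2
            _ ≤ t1 + 2*(t2+1) := by omega
        · push_cast [hφ]; simp only [phi, Sum.elim_inl, Sum.elim_inr, id, hb]; ring
        · simpa [sd] using hs
        · intro hs0; exact ⟨fun _ => (h0 hs0).1 (by simp [sd]), by simp [sd]⟩
      · refine ⟨s, t1, t2 + 1, m - 2, by change q.length + 1 = _; omega, ?_, ?_, ?_, ?_⟩
        · calc (m-2).natAbs ≤ m.natAbs + 2 := Int.natAbs_sub_le m 2
            _ ≤ t1 + 2*(t2+1) := by omega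
        · push_cast [hφ]; simp only [phi, Sum.elim_inl, Sum.elim_inr, id, hb]; ring
        · simpa [sd] using hs
        · intro hs0; exact ⟨fun _ => (h0 hs0).1 (by simp [sd]), by simp [sd]⟩

lemma key_natAbs (k : ℕ) (hk : 3 ≤ k) {m : ℤ}
    (hm : (m : ZMod (4*k)) = ((2*k : ℕ) : ZMod (4*k))) : 2*k ≤ m.natAbs := by
  by_contra h
  push_neg at h
  have h1 : ((m - (2*k : ℕ) : ℤ) : ZMod (4*k)) = 0 := by push_cast [hm]; push_cast; ring
  rw [ZMod.intCast_zmod_eq_zero_iff_dvd] at h1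
  have h2 : ((4*k : ℕ) : ℤ) ∣ ((2*k : ℕ) : ℤ) - m := by
    have := dvd_neg.mpr h1; rwa [neg_sub] at this
  have hpos : (0 : ℤ) < ((2*k:ℕ):ℤ) - m := by push_cast; omega
  have := Int.le_of_dvd hpos h2
  push_cast at this
  omega

lemma inner_walk (k : ℕ) (hk : 3 ≤ k) : ∀ (t i : ℕ),
    ∃ w : (GP (4*k) 2).Walk (Sum.inr ((i : ℕ) : ZMod (4*k))) (Sum.inr ((i + 2*t : ℕ) : ZMod (4*k))),
      w.length = t ∧
      w.support = (List.range (t+1)).map (fun s => Sum.inr ((i + 2*s : ℕ) : ZMod (4*k))) := by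
  intro t
  induction t with
  | zero => intro i; exact ⟨(SimpleGraph.Walk.nil).copy rfl (by norm_num), by simp, by simp [List.range_succ]⟩
  | succ t ih =>
    intro i
    obtain ⟨w, hwl, hws⟩ := ih (i + 2)
    have hadj : (GP (4*k) 2).Adj (Sum.inr ((i : ℕ) : ZMod (4*k))) (Sum.inr ((i + 2 : ℕ) : ZMod (4*k))) := by
      constructor
      · intro hcon
        have : ((2:ℕ) : ZMod (4*k)) = 0 := by
          have : ((i:ℕ) : ZMod (4*k)) + 2 = (i : ZMod (4*k)) + 0 := by
            push_cast at hcon ⊢; rw [← hcon]; ring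
          exact by push_cast at this ⊢; linear_combination this
        rw [ZMod.natCast_eq_zero_iff] at this
        have := Nat.le_of_dvd (by norm_num) this
        omega
      · left; push_cast; ring
    have hlist : (List.range (t+1+1)).map
          (fun s => (Sum.inr ((i + 2*s : ℕ) : ZMod (4*k)) : ZMod (4*k) ⊕ ZMod (4*k)))
        = (Sum.inr ((i:ℕ) : ZMod (4*k)) : ZMod (4*k) ⊕ ZMod (4*k)) ::
          (List.range (t+1)).map
            (fun s => (Sum.inr ((i+2+2*s : ℕ) : ZMod (4*k)) : ZMod (4*k) ⊕ ZMod (4*k))) := by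
      rw [List.range_succ_eq_map, List.map_cons, List.map_map]
      congr 1
      apply List.map_congr_left
      intro a ha
      have h2a : i + 2 * (a+1) = i + 2 + 2*a := by ring
      simp only [Function.comp_apply, Nat.succ_eq_add_one, h2a]
    refine ⟨(SimpleGraph.Walk.cons hadj w).copy rfl
      (by rw [show i + 2 + 2*t = i + 2*(t+1) from by ring]), by simp [hwl], ?_⟩
    rw [SimpleGraph.Walk.support_copy, SimpleGraph.Walk.support_cons, hws]
    exact hlist.symm

lemma neg_2k (k : ℕ) (hk : 3 ≤ k) :
    -(((2*k : ℕ)) : ZMod (4*k)) = ((2*k : ℕ) : ZMod (4*k)) := by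
  have h4 : ((4*k : ℕ) : ZMod (4*k)) = 0 := ZMod.natCast_self _
  have h : ((2*k:ℕ) : ZMod (4*k)) + ((2*k:ℕ) : ZMod (4*k)) = 0 := by
    push_cast at h4 ⊢; linear_combination h4
  exact neg_eq_of_add_eq_zero_left h

lemma phi_diff (k : ℕ) (hk : 3 ≤ k) (i : ℕ) :
    (((i + 2*k : ℕ) : ZMod (4*k))) - ((i : ℕ) : ZMod (4*k)) = ((2*k : ℕ) : ZMod (4*k)) := by
  push_cast; ring

lemma dist_spoke (k : ℕ) (hk : 3 ≤ k) (a : ZMod (4*k)) :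
    (GP (4*k) 2).dist (Sum.inl a) (Sum.inr a) = 1 := by
  rw [SimpleGraph.dist_eq_one_iff_adj]; exact rfl

lemma dist_vv (k : ℕ) (hk : 3 ≤ k) (i : ℕ) :
    (GP (4*k) 2).dist (Sum.inr ((i : ℕ) : ZMod (4*k))) (Sum.inr ((i + 2*k : ℕ) : ZMod (4*k))) = k := by
  obtain ⟨w, hwl, -⟩ := inner_walk k hk k i
  have hub := SimpleGraph.dist_le w
  rw [hwl] at hub
  refine le_antisymm hub ?_
  obtain ⟨p, hp⟩ := w.reachable.exists_walk_length_eq_dist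
  obtain ⟨s, t1, t2, m, hl, hm, hφ, -, -⟩ := walk_inv (4*k) p
  simp only [phi, Sum.elim_inr, Sum.elim_inl, id] at hφ
  rw [phi_diff k hk i] at hφ
  have := key_natAbs k hk hφ
  omega

lemma dist_uv (k : ℕ) (hk : 3 ≤ k) (i : ℕ) :
    (GP (4*k) 2).dist (Sum.inl ((i : ℕ) : ZMod (4*k))) (Sum.inr ((i + 2*k : ℕ) : ZMod (4*k))) = k + 1 := by
  obtain ⟨w, hwl, -⟩ := inner_walk k hk k i
  have hadj : (GP (4*k) 2).Adj (Sum.inl ((i : ℕ) : ZMod (4*k))) (Sum.inr ((i : ℕ) : ZMod (4*k))) := rfl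
  have hub := SimpleGraph.dist_le (SimpleGraph.Walk.cons hadj w)
  rw [SimpleGraph.Walk.length_cons, hwl] at hub
  refine le_antisymm hub ?_
  obtain ⟨p, hp⟩ := (SimpleGraph.Walk.cons hadj w).reachable.exists_walk_length_eq_dist
  obtain ⟨s, t1, t2, m, hl, hm, hφ, hpar, -⟩ := walk_inv (4*k) p
  simp only [phi, Sum.elim_inr, Sum.elim_inl, id] at hφ
  rw [phi_diff k hk i] at hφ
  have hkey := key_natAbs k hk hφ
  have hso : ¬ Even s := by simp [sd] at hpar; exact Nat.not_even_iff_odd.mpr hpar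
  have hs1 : s ≠ 0 := fun h => hso (by simp [h])
  omega

lemma dist_vu (k : ℕ) (hk : 3 ≤ k) (i : ℕ) :
    (GP (4*k) 2).dist (Sum.inr ((i : ℕ) : ZMod (4*k))) (Sum.inl ((i + 2*k : ℕ) : ZMod (4*k))) = k + 1 := by
  obtain ⟨w, hwl, -⟩ := inner_walk k hk k i
  have hadj : (GP (4*k) 2).Adj (Sum.inr ((i + 2*k : ℕ) : ZMod (4*k))) (Sum.inl ((i + 2*k : ℕ) : ZMod (4*k))) := rfl
  have hub := SimpleGraph.dist_le (w.append (SimpleGraph.Walk.cons hadj SimpleGraph.Walk.nil))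
  rw [SimpleGraph.Walk.length_append, SimpleGraph.Walk.length_cons, SimpleGraph.Walk.length_nil, hwl] at hub
  refine le_antisymm hub ?_
  obtain ⟨p, hp⟩ := (w.append (SimpleGraph.Walk.cons hadj SimpleGraph.Walk.nil)).reachable.exists_walk_length_eq_dist
  obtain ⟨s, t1, t2, m, hl, hm, hφ, hpar, -⟩ := walk_inv (4*k) p
  simp only [phi, Sum.elim_inr, Sum.elim_inl, id] at hφ
  rw [phi_diff k hk i] at hφ
  have hkey := key_natAbs k hk hφ
  have hso : ¬ Even s := by simp [sd] at hpar; exact Nat.not_even_iff_odd.mpr hpar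
  have hs1 : s ≠ 0 := fun h => hso (by simp [h])
  omega

lemma dist_uu (k : ℕ) (hk : 3 ≤ k) (i : ℕ) :
    (GP (4*k) 2).dist (Sum.inl ((i : ℕ) : ZMod (4*k))) (Sum.inl ((i + 2*k : ℕ) : ZMod (4*k))) = k + 2 := by
  obtain ⟨w, hwl, -⟩ := inner_walk k hk k i
  have hadj1 : (GP (4*k) 2).Adj (Sum.inl ((i : ℕ) : ZMod (4*k))) (Sum.inr ((i : ℕ) : ZMod (4*k))) := rfl
  have hadj2 : (GP (4*k) 2).Adj (Sum.inr ((i + 2*k : ℕ) : ZMod (4*k))) (Sum.inl ((i + 2*k : ℕ) : ZMod (4*k))) := rfl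
  have hub := SimpleGraph.dist_le (SimpleGraph.Walk.cons hadj1 (w.append (SimpleGraph.Walk.cons hadj2 SimpleGraph.Walk.nil)))
  rw [SimpleGraph.Walk.length_cons, SimpleGraph.Walk.length_append, SimpleGraph.Walk.length_cons,
    SimpleGraph.Walk.length_nil, hwl] at hub
  refine le_antisymm (by omega) ?_
  obtain ⟨p, hp⟩ := (SimpleGraph.Walk.cons hadj1 (w.append (SimpleGraph.Walk.cons hadj2 SimpleGraph.Walk.nil))).reachable.exists_walk_length_eq_dist
  obtain ⟨s, t1, t2, m, hl, hm, hφ, hpar, h0⟩ := walk_inv (4*k) p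
  simp only [phi, Sum.elim_inr, Sum.elim_inl, id] at hφ
  rw [phi_diff k hk i] at hφ
  have hkey := key_natAbs k hk hφ
  rcases Nat.eq_zero_or_pos s with hs0 | hs1
  · have ht2 : t2 = 0 := (h0 hs0).2 (by simp [sd])
    omega
  · have hse : Even s := by simpa [sd] using hpar
    obtain ⟨c, hc⟩ := hse
    omega

/-- In `GP (4k) 2` with `k ≥ 3`, for even `i < j` with `j − i = 2k`, the pair
`(vᵢ, vⱼ)` is strongly resolved by both `uᵢ` and `uⱼ`; indeed
`uᵢ, vᵢ, v_{i+2}, …, v_{i+2k}, u_{i+2k}` is a shortest `uᵢ`–`u_{i+2k}` path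
containing both `vᵢ` and `vⱼ`. -/
theorem stmt_19 (k i j : ℕ) (hk : 3 ≤ k) (hi : Even i) (hj : Even j) (hij : i < j)
    (he : j - i = 2*k) :
    StronglyResolves (GP (4*k) 2) (Sum.inl ((i : ℕ) : ZMod (4*k)))
      (Sum.inr ((i : ℕ) : ZMod (4*k))) (Sum.inr ((j : ℕ) : ZMod (4*k))) ∧
    StronglyResolves (GP (4*k) 2) (Sum.inl ((j : ℕ) : ZMod (4*k)))
      (Sum.inr ((i : ℕ) : ZMod (4*k))) (Sum.inr ((j : ℕ) : ZMod (4*k))) ∧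
    ∃ p : (GP (4*k) 2).Walk (Sum.inl ((i : ℕ) : ZMod (4*k)))
        (Sum.inl ((i + 2*k : ℕ) : ZMod (4*k))),
      p.length = (GP (4*k) 2).dist (Sum.inl ((i : ℕ) : ZMod (4*k)))
        (Sum.inl ((i + 2*k : ℕ) : ZMod (4*k))) ∧
      p.support = [Sum.inl ((i : ℕ) : ZMod (4*k))] ++
        ((List.range (k + 1)).map (fun t => Sum.inr ((i + 2*t : ℕ) : ZMod (4*k)))) ++
        [Sum.inl ((i + 2*k : ℕ) : ZMod (4*k))] := by
  obtain rfl : j = i + 2*k := by omega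
  have d1 := dist_spoke k hk ((i : ℕ) : ZMod (4*k))
  have d1' := dist_spoke k hk (((i + 2*k : ℕ)) : ZMod (4*k))
  have d2 := dist_vv k hk i
  have d3 := dist_uv k hk i
  have d4 := dist_vu k hk i
  refine ⟨Or.inr ?_, Or.inl ?_, ?_⟩
  · rw [d3, d1, d2]; omega
  · have e1 : (GP (4*k) 2).dist (Sum.inl ((i + 2*k : ℕ) : ZMod (4*k))) (Sum.inr ((i : ℕ) : ZMod (4*k))) = k + 1 := by
      rw [SimpleGraph.dist_comm]; exact d4
    have e3 : (GP (4*k) 2).dist (Sum.inr ((i + 2*k : ℕ) : ZMod (4*k))) (Sum.inr ((i : ℕ) : ZMod (4*k))) = k := by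
      rw [SimpleGraph.dist_comm]; exact d2
    rw [e1, e3, d1']; omega
  · obtain ⟨w, hwl, hws⟩ := inner_walk k hk k i
    have hadj1 : (GP (4*k) 2).Adj (Sum.inl ((i : ℕ) : ZMod (4*k))) (Sum.inr ((i : ℕ) : ZMod (4*k))) := rfl
    have hadj2 : (GP (4*k) 2).Adj (Sum.inr ((i + 2*k : ℕ) : ZMod (4*k))) (Sum.inl ((i + 2*k : ℕ) : ZMod (4*k))) := rfl
    refine ⟨SimpleGraph.Walk.cons hadj1 (w.append (SimpleGraph.Walk.cons hadj2 SimpleGraph.Walk.nil)), ?_, ?_⟩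
    · rw [dist_uu k hk i, SimpleGraph.Walk.length_cons, SimpleGraph.Walk.length_append,
        SimpleGraph.Walk.length_cons, SimpleGraph.Walk.length_nil, hwl]
    · rw [SimpleGraph.Walk.support_cons, SimpleGraph.Walk.support_append, hws]
      simp
end
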